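/- Define τ(z) (resp. τ₊(z)) as the length of the shortest division-free straight-line program over {+, −, ×} (resp. {+, ×}) starting from the constant 1 that computes the integer z. Then for every z with 2^n ≤ z < 2^(n+1), τ₊(z) ≤ 2^k - 1 + 2·⌈(n+1)/k⌉ for any k ≥ 1; in particular, choosing k = ⌈log n − log log n⌉ gives τ₊(z) = O(n/log n). -/

import Mathlib

/-- `Computes allowSub l z` : there is a straight-line program of length `l`,
starting from the constant `1`, where each later register is the sum, product,
or (if `allowSub = true`) difference of two earlier registers, whose final
register equals `z`. With `allowSub = false` this is an
addition–multiplication chain (AMC). -/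
def Computes (allowSub : Bool) (l : ℕ) (z : ℤ) : Prop :=
  ∃ a : ℕ → ℤ, a 0 = 1 ∧
    (∀ i, 1 ≤ i → i ≤ l → ∃ j k, j < i ∧ k < i ∧
      (a i = a j + a k ∨ a i = a j * a k ∨ (allowSub = true ∧ a i = a j - a k))) ∧
    a l = z

/-- `τ₊ z` : minimal length of an addition–multiplication chain computing `z`. -/
noncomputable def tauPlus (z : ℤ) : ℕ := sInf {l : ℕ | Computes false l z}

lemma computes_pad_one {b : Bool} {l : ℕ} {z : ℤ} (h : Computes b l z) :
    Computes b (l + 1) z := by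
  obtain ⟨a, h0, hstep, hl⟩ := h
  refine ⟨fun i => if i ≤ l then a i else z, by simp [h0], ?_, by simp⟩
  intro i hi1 hi2
  rcases Nat.lt_or_ge i (l + 1) with h' | h'
  · have hil : i ≤ l := by omega
    obtain ⟨j, k', hj, hk, hc⟩ := hstep i hi1 hil
    refine ⟨j, k', hj, hk, ?_⟩
    have hjl : j ≤ l := by omega
    have hkl : k' ≤ l := by omega
    simpa [hil, hjl, hkl] using hc
  · have hi : i = l + 1 := by omega
    subst hi
    refine ⟨l, 0, by omega, by omega, Or.inr (Or.inl ?_)⟩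
    simp [hl, h0]

lemma computes_pad {b : Bool} {l l' : ℕ} {z : ℤ} (h : Computes b l z) (hle : l ≤ l') :
    Computes b l' z := by
  induction l' , hle using Nat.le_induction with
  | base => exact h
  | succ n hn ih => exact computes_pad_one ih

lemma computes_small (z' : ℕ) (h : 1 ≤ z') : Computes false (z' - 1) (z' : ℤ) := by
  have h0 : 0 < z' := h
  refine ⟨fun i => if i < z' then (i : ℤ) + 1 else z', by simp [h0], ?_, ?_⟩
  · intro i hi1 hi2
    refine ⟨i - 1, 0, by omega, by omega, Or.inl ?_⟩
    have h1 : i < z' := by omega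
    have h2 : i - 1 < z' := by omega
    simp only [h1, h2, h0, if_pos]
    omega
  · have : z' - 1 < z' := by omega
    simp only [this, if_pos]
    omega

lemma computes_horner (B m z' : ℕ) (hB : 2 ≤ B) (hm : 2 ≤ m)
    (hlow : B ^ (m - 1) ≤ z') (hhigh : z' < B ^ m) :
    Computes false (B - 1 + 2 * (m - 1)) (z' : ℤ) := by
  set q : ℕ → ℕ := fun j => z' / B ^ j with hq
  have hq0 : q 0 = z' := by simp [hq]
  have hBpos : 0 < B := by omega
  have hqtop_lt : q (m - 1) < B := by
    have hpow : B ^ m = B ^ (m - 1) * B := by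
      rw [← pow_succ]; congr 1; omega
    have : z' < B ^ (m - 1) * B := by omega
    exact Nat.div_lt_of_lt_mul this
  have hqtop_ge : 1 ≤ q (m - 1) :=
    (Nat.one_le_div_iff (pow_pos hBpos _)).mpr hlow
  have hrec : ∀ j, q j = q (j + 1) * B + q j % B := by
    intro j
    have h1 : q (j + 1) = q j / B := by
      simp [hq, pow_succ, Nat.div_div_eq_div_mul]
    rw [h1]
    exact (Nat.div_add_mod' (q j) B).symm
  set a : ℕ → ℤ := fun i =>
    if i < B then (i : ℤ) + 1
    else if (i - B) % 2 = 0 then ((q (m - 1 - (i - B) / 2) * B : ℕ) : ℤ)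
    else ((q (m - 2 - (i - B) / 2) : ℕ) : ℤ) with ha
  have ha_lt : ∀ i, i < B → a i = (i : ℤ) + 1 := by
    intro i hi; simp [ha, hi]
  have ha_B1 : a (B - 1) = (B : ℤ) := by
    rw [ha_lt (B - 1) (by omega)]; omega
  have ha_even : ∀ j, a (B + 2 * j) = (q (m - 1 - j) : ℤ) * B := by
    intro j
    have h1 : ¬ (B + 2 * j < B) := by omega
    have h2 : B + 2 * j - B = 2 * j := by omega
    have h3 : 2 * j % 2 = 0 := by omega
    have h4 : 2 * j / 2 = j := by omega
    simp only [ha, h1, if_false, h2, h3, if_pos rfl, h4]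
    push_cast; ring
  have ha_odd : ∀ j, a (B + (2 * j + 1)) = (q (m - 2 - j) : ℤ) := by
    intro j
    have h1 : ¬ (B + (2 * j + 1) < B) := by omega
    have h2 : B + (2 * j + 1) - B = 2 * j + 1 := by omega
    have h3 : ¬ ((2 * j + 1) % 2 = 0) := by omega
    have h4 : (2 * j + 1) / 2 = j := by omega
    simp only [ha, h1, if_false, h2, h3, if_false, h4]
  refine ⟨a, by rw [ha_lt 0 (by omega)]; norm_num, ?_, ?_⟩
  · intro i hi1 hi2
    by_cases hiB : i < B
    · refine ⟨i - 1, 0, by omega, by omega, Or.inl ?_⟩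
      rw [ha_lt i hiB, ha_lt (i - 1) (by omega), ha_lt 0 (by omega)]
      omega
    · push_neg at hiB
      have ht : i - B ≤ 2 * m - 3 := by omega
      rcases Nat.even_or_odd (i - B) with ⟨j, hj⟩ | ⟨j, hj⟩
      · -- multiplication step: a i = acc * B
        have hij : i = B + 2 * j := by omega
        have hjm : j ≤ m - 2 := by omega
        by_cases hj0 : j = 0
        · subst hj0
          refine ⟨q (m - 1) - 1, B - 1, by omega, by omega, Or.inr (Or.inl ?_)⟩
          rw [hij, ha_even 0, ha_lt (q (m - 1) - 1) (by omega), ha_B1]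
          have : ((q (m - 1) - 1 : ℕ) : ℤ) + 1 = (q (m - 1) : ℤ) := by omega
          rw [this]
          simp
        · refine ⟨i - 1, B - 1, by omega, by omega, Or.inr (Or.inl ?_)⟩
          rw [hij, ha_even j, show B + 2 * j - 1 = B + (2 * (j - 1) + 1) from by omega,
            ha_odd (j - 1), ha_B1, show m - 2 - (j - 1) = m - 1 - j from by omega]
      · -- addition step: a i = acc * B + digit
        have hij : i = B + (2 * j + 1) := by omega
        have hjm : j ≤ m - 2 := by omega
        have hprev : B + (2 * j + 1) - 1 = B + 2 * j := by omega
        have hidx : m - 1 - j = (m - 2 - j) + 1 := by omega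
        have hr := hrec (m - 2 - j)
        rw [← hidx] at hr
        set d : ℕ := q (m - 2 - j) % B with hd
        have hdB : d < B := Nat.mod_lt _ hBpos
        by_cases hd0 : d = 0
        · refine ⟨i - 1, 0, by omega, by omega, Or.inr (Or.inl ?_)⟩
          rw [hij, ha_odd j, hprev, ha_even j, ha_lt 0 (by omega)]
          have : q (m - 2 - j) = q (m - 1 - j) * B := by omega
          rw [this]; push_cast; ring
        · refine ⟨i - 1, d - 1, by omega, by omega, Or.inl ?_⟩
          rw [hij, ha_odd j, hprev, ha_even j, ha_lt (d - 1) (by omega)]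
          have h5 : (q (m - 2 - j) : ℤ) = (q (m - 1 - j) : ℤ) * B + ((d - 1 : ℕ) : ℤ) + 1 := by
            have : q (m - 2 - j) = q (m - 1 - j) * B + d := hr
            push_cast [this]
            omega
          rw [h5]; ring
  · have hfin : B - 1 + 2 * (m - 1) = B + (2 * (m - 2) + 1) := by omega
    rw [hfin, ha_odd (m - 2)]
    simp [hq0, Nat.sub_self]

lemma tauPlus_le (n k : ℕ) (z : ℤ) (hk : 1 ≤ k) (hlow : 2 ^ n ≤ z)
    (hhigh : z < 2 ^ (n + 1)) : tauPlus z ≤ 2 ^ k - 1 + 2 * ((n + k) / k) := by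
  have hz0 : (0 : ℤ) ≤ z := le_trans (by positivity) hlow
  set z' : ℕ := z.toNat with hz'
  have hzz : (z' : ℤ) = z := Int.toNat_of_nonneg hz0
  have hlow' : 2 ^ n ≤ z' := by
    have : ((2 ^ n : ℕ) : ℤ) ≤ (z' : ℤ) := by push_cast; rw [hzz]; exact_mod_cast hlow
    exact_mod_cast this
  have hhigh' : z' < 2 ^ (n + 1) := by
    have : (z' : ℤ) < ((2 ^ (n + 1) : ℕ) : ℤ) := by push_cast; rw [hzz]; exact_mod_cast hhigh
    exact_mod_cast this
  have hz1 : 1 ≤ z' := le_trans (Nat.one_le_two_pow) hlow'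
  have hdiv : (n + k) / k = n / k + 1 := Nat.add_div_right n hk
  have hmem : Computes false (2 ^ k - 1 + 2 * ((n + k) / k)) z := by
    rw [← hzz]
    by_cases hnk : n < k
    · -- z' < 2^(n+1) ≤ 2^k, use the trivial chain
      have hzB : z' < 2 ^ k := lt_of_lt_of_le hhigh' (Nat.pow_le_pow_right (by norm_num) (by omega))
      exact computes_pad (computes_small z' hz1) (by omega)
    · push_neg at hnk
      set m : ℕ := n / k + 1 with hm
      have hm2 : 2 ≤ m := by
        have : 1 ≤ n / k := (Nat.one_le_div_iff (by omega)).mpr hnk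
        omega
      have hdm := Nat.div_add_mod n k
      have hmod := Nat.mod_lt n (show 0 < k by omega)
      have hle1 : (2 ^ k) ^ (m - 1) ≤ z' := by
        rw [← pow_mul]
        refine le_trans (Nat.pow_le_pow_right (by norm_num) ?_) hlow'
        have : m - 1 = n / k := by omega
        rw [this]; omega
      have hle2 : z' < (2 ^ k) ^ m := by
        rw [← pow_mul]
        refine lt_of_lt_of_le hhigh' (Nat.pow_le_pow_right (by norm_num) ?_)
        have : k * m = k * (n / k) + k := by rw [hm]; ring
        omega
      have h := computes_horner (2 ^ k) m z' (Nat.one_lt_two_pow_iff.mpr (by omega)) hm2 hle1 hle2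
      exact computes_pad h (by omega)
  exact Nat.sInf_le hmem

lemma le_pow_half (L : ℕ) : L ≤ 2 ^ (L / 2 + 1) := by
  induction L using Nat.strong_induction_on with
  | _ L ih =>
    match L with
    | 0 => norm_num
    | 1 => norm_num
    | (L + 2) =>
      have h := ih L (by omega)
      have he : (L + 2) / 2 + 1 = (L / 2 + 1) + 1 := by omega
      rw [he, pow_succ]
      have h2 : 1 ≤ 2 ^ (L / 2 + 1) := Nat.one_le_two_pow
      omega

theorem tauPlus_upper_bound :
    (∀ (n k : ℕ) (z : ℤ), 1 ≤ k → 2 ^ n ≤ z → z < 2 ^ (n + 1) →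
      tauPlus z ≤ 2 ^ k - 1 + 2 * ((n + k) / k)) ∧
    ∃ C : ℕ, ∀ (n : ℕ) (z : ℤ), 2 ≤ n → 2 ^ n ≤ z → z < 2 ^ (n + 1) →
      tauPlus z * Nat.log 2 n ≤ C * n := by
  refine ⟨tauPlus_le, 12, ?_⟩
  intro n z hn hlow hhigh
  set L : ℕ := Nat.log 2 n with hL
  have hL1 : 1 ≤ L := Nat.log_pos (by norm_num) hn
  set k : ℕ := L / 2 + 1 with hk
  have hbound := tauPlus_le n k z (by omega) hlow hhigh
  -- 2^L ≤ n
  have hpow : 2 ^ L ≤ n := Nat.pow_log_le_self 2 (by omega)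
  have hLn : L < n := lt_of_lt_of_le (Nat.lt_two_pow_self (n := L)) hpow
  have hkn : k ≤ n := by omega
  -- 2^k * L ≤ 4 * n
  have h1 : 2 ^ k * L ≤ 4 * n := by
    have a1 : L ≤ 2 ^ k := le_pow_half L
    have a2 : 2 ^ k * 2 ^ k ≤ 2 ^ (L + 2) := by
      rw [← pow_add]
      exact Nat.pow_le_pow_right (by norm_num) (by omega)
    have a3 : 2 ^ k * L ≤ 2 ^ k * 2 ^ k := Nat.mul_le_mul_left _ a1
    have a4 : 2 ^ (L + 2) = 4 * 2 ^ L := by rw [pow_add]; ring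
    omega
  -- ((n + k) / k) * L ≤ 2 * (n + k)
  have h2 : ((n + k) / k) * L ≤ 2 * (n + k) := by
    have b1 : L ≤ 2 * k := by omega
    have b2 : ((n + k) / k) * L ≤ ((n + k) / k) * (2 * k) := Nat.mul_le_mul_left _ b1
    have b3 : ((n + k) / k) * k ≤ n + k := Nat.div_mul_le_self _ _
    calc ((n + k) / k) * L ≤ ((n + k) / k) * (2 * k) := b2
      _ = 2 * (((n + k) / k) * k) := by ring
      _ ≤ 2 * (n + k) := by omega
  have h3 : tauPlus z * L ≤ (2 ^ k - 1 + 2 * ((n + k) / k)) * L :=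
    Nat.mul_le_mul_right _ hbound
  have h4 : (2 ^ k - 1 + 2 * ((n + k) / k)) * L
      = (2 ^ k - 1) * L + 2 * (((n + k) / k) * L) := by ring
  have h5 : (2 ^ k - 1) * L ≤ 2 ^ k * L := Nat.mul_le_mul_right _ (Nat.sub_le _ _)
  have h6 : (2 ^ k - 1) * L ≤ 4 * n := le_trans h5 h1
  calc tauPlus z * L ≤ (2 ^ k - 1) * L + 2 * (((n + k) / k) * L) := h4 ▸ h3
    _ ≤ 4 * n + 2 * (2 * (n + k)) := by
        have := h2
        omega
    _ ≤ 12 * n := by omega
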